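/- (Theorem 1) Let γ₁ with 0 < 2γ₁ ≤ 2/3, γ₂ ∈ (0,1], ν̄, θ̄ ≥ 0, integer ℓ ≥ 2, and scalars 0 < b̂ ≤ b̌. Then there exists C ≥ 0, depending only on γ₁, ν̄, θ̄, ℓ, b̂, b̌, such that the following holds. Let p : ℕ → ℝⁿ, let η⁻¹ : ℕ → (n×n symmetric positive definite matrices) satisfy η⁻¹(k+1) = γ₁ η⁻¹(k) + (1/γ₂) p(k+1) p(k+1)ᵀ and b̂ Iₙ ≤ η⁻¹(k) ≤ b̌ Iₙ in the Loewner order for all k. Let (kₘ)_{m≥1} be strictly increasing impulse instants with k₁ = 0 and kₘ₊₁ − kₘ ≥ ℓ, and let ν, θ : ℕ → ℝⁿ with ‖ν(k)‖ ≤ ν̄ and ‖θ(k)‖ ≤ θ̄. If the estimation error ê : ℕ → ℝⁿ satisfies ê(k+1) = γ₁ η(k+1) η⁻¹(k) (ê(k) + ν(k)) at non-impulse instants and ê(k+1) = γ₁ η(k+1) η⁻¹(k) (ê(k) + ν(k) + θ(k)) at impulse instants k = kₘ, then limsup_{k→∞} ‖ê(k)‖² ≤ C. That is, the target position estimator approximately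 estimates the target position, with an asymptotic error bound independent of the initial estimation error. -/

import Mathlib

open Matrix Filter

namespace TPEProofAux

variable {n : ℕ}

lemma dot_nonneg {M : Matrix (Fin n) (Fin n) ℝ} (hM : M.PosSemidef)
    (x : Fin n → ℝ) : 0 ≤ x ⬝ᵥ (M *ᵥ x) := by simpa using hM.dotProduct_mulVec_nonneg x

lemma psd_smul {c : ℝ} (hc : 0 ≤ c) {M : Matrix (Fin n) (Fin n) ℝ} (hM : M.PosSemidef) :
    (c • M).PosSemidef := by
  refine PosSemidef.of_dotProduct_mulVec_nonneg ?_ fun x => ?_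
  · show (c • M)ᴴ = c • M
    rw [conjTranspose_smul]
    have hMt : Mᴴ = M := hM.1
    simp only [star_trivial]
    rw [hMt]
  · rw [smul_mulVec, dotProduct_smul]
    exact smul_nonneg hc (hM.dotProduct_mulVec_nonneg x)

lemma posdef_smul {c : ℝ} (hc : 0 < c) {M : Matrix (Fin n) (Fin n) ℝ} (hM : M.PosDef) :
    (c • M).PosDef := by
  refine PosDef.of_dotProduct_mulVec_pos (psd_smul hc.le hM.posSemidef).1 fun x hx => ?_
  rw [smul_mulVec, dotProduct_smul]
  exact smul_pos hc (hM.dotProduct_mulVec_pos hx)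

lemma psd_vecMulVec (v : Fin n → ℝ) : (vecMulVec v v).PosSemidef := by
  refine PosSemidef.of_dotProduct_mulVec_nonneg ?_ fun x => ?_
  · show (vecMulVec v v)ᴴ = vecMulVec v v
    ext i j; simp [vecMulVec_apply, mul_comm]
  · have h : (vecMulVec v v) *ᵥ x = (v ⬝ᵥ x) • v := by
      ext i
      simp only [mulVec, vecMulVec_apply, dotProduct, Pi.smul_apply, smul_eq_mul,
        Finset.sum_mul]
      exact Finset.sum_congr rfl fun j _ => by ring
    rw [star_trivial, h, dotProduct_smul]
    have h2 : x ⬝ᵥ v = v ⬝ᵥ x := dotProduct_comm _ _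
    rw [smul_eq_mul, h2]
    exact mul_self_nonneg _

lemma inv_antitone {A N : Matrix (Fin n) (Fin n) ℝ} (hA : A.PosDef) (hN : N.PosDef)
    (h : (N - A).PosSemidef) : (A⁻¹ - N⁻¹).PosSemidef := by
  have hAd : IsUnit A.det := isUnit_iff_ne_zero.mpr hA.det_pos.ne'
  have hNd : IsUnit N.det := isUnit_iff_ne_zero.mpr hN.det_pos.ne'
  have hNinvH : (N⁻¹)ᴴ = N⁻¹ := hN.posSemidef.inv.1
  have hNAH : (N⁻¹ * (N - A))ᴴ = (N - A) * N⁻¹ := by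
    rw [conjTranspose_mul, h.1, hNinvH]
  have key : A⁻¹ - N⁻¹ =
      (N⁻¹ * (N - A)) * A⁻¹ * (N⁻¹ * (N - A))ᴴ + N⁻¹ * (N - A) * (N⁻¹)ᴴ := by
    rw [hNAH, hNinvH]
    have e1 : N⁻¹ * (N - A) = 1 - N⁻¹ * A := by
      rw [Matrix.mul_sub, nonsing_inv_mul _ hNd]
    have e3 : (N - A) * N⁻¹ = 1 - A * N⁻¹ := by
      rw [Matrix.sub_mul, mul_nonsing_inv _ hNd]
    simp only [e1, e3, Matrix.sub_mul, Matrix.mul_sub, Matrix.one_mul, Matrix.mul_one,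
      mul_nonsing_inv_cancel_right _ _ hAd, nonsing_inv_mul_cancel_left _ _ hAd,
      nonsing_inv_mul _ hAd,
      ← Matrix.mul_assoc]
    abel
  rw [key]
  exact ((hA.posSemidef.inv).mul_mul_conjTranspose_same _).add
    (h.mul_mul_conjTranspose_same _)

lemma contraction {M N : Matrix (Fin n) (Fin n) ℝ} (hM : M.PosDef) (hN : N.PosDef)
    {γ : ℝ} (hγ : 0 < γ) (hle : (N - γ • M).PosSemidef) :
    (γ • M - (γ ^ 2) • (M * N⁻¹ * M)).PosSemidef := by
  have hMd : IsUnit M.det := isUnit_iff_ne_zero.mpr hM.det_pos.ne'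
  have hA : (γ • M).PosDef := posdef_smul hγ hM
  have h1 : ((γ • M)⁻¹ - N⁻¹).PosSemidef := inv_antitone hA hN hle
  have h2 : (M * ((γ • M)⁻¹ - N⁻¹) * Mᴴ).PosSemidef := h1.mul_mul_conjTranspose_same M
  have hMH : Mᴴ = M := hM.1
  have hsm : (γ • M)⁻¹ = γ⁻¹ • M⁻¹ := by
    apply Matrix.inv_eq_left_inv
    rw [Matrix.smul_mul, Matrix.mul_smul, smul_smul, inv_mul_cancel₀ hγ.ne',
      one_smul, nonsing_inv_mul _ hMd]
  have heq : M * ((γ • M)⁻¹ - N⁻¹) * Mᴴ = γ⁻¹ • M - M * N⁻¹ * M := by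
    rw [hMH, hsm, Matrix.mul_sub, Matrix.sub_mul, Matrix.mul_smul, Matrix.smul_mul,
      mul_nonsing_inv _ hMd, Matrix.one_mul]
  rw [heq] at h2
  have h3 := psd_smul (c := γ ^ 2) (sq_nonneg γ) h2
  have h4 : (γ ^ 2) • (γ⁻¹ • M - M * N⁻¹ * M) = γ • M - (γ ^ 2) • (M * N⁻¹ * M) := by
    rw [smul_sub, smul_smul]
    congr 2
    field_simp
  rwa [h4] at h3

lemma quad_add_le {M : Matrix (Fin n) (Fin n) ℝ} (hM : M.PosSemidef) (a b : Fin n → ℝ) :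
    (a + b) ⬝ᵥ (M *ᵥ (a + b)) ≤ 2 * (a ⬝ᵥ (M *ᵥ a)) + 2 * (b ⬝ᵥ (M *ᵥ b)) := by
  have h := dot_nonneg hM (a - b)
  have expand : (a + b) ⬝ᵥ (M *ᵥ (a + b)) + (a - b) ⬝ᵥ (M *ᵥ (a - b))
      = 2 * (a ⬝ᵥ (M *ᵥ a)) + 2 * (b ⬝ᵥ (M *ᵥ b)) := by
    simp only [mulVec_add, mulVec_sub, dotProduct_add, dotProduct_sub,
      add_dotProduct, sub_dotProduct]
    ring
  linarith

lemma transpose_eq {M : Matrix (Fin n) (Fin n) ℝ} (h : M.IsHermitian) : Mᵀ = M := by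
  ext i j
  conv_rhs => rw [← h.eq]
  simp [conjTranspose_apply]

lemma dot_shift (A : Matrix (Fin n) (Fin n) ℝ) (x y : Fin n → ℝ) :
    (A *ᵥ x) ⬝ᵥ y = x ⬝ᵥ (Aᵀ *ᵥ y) := by
  rw [dotProduct_comm, dotProduct_mulVec, mulVec_transpose, dotProduct_comm]

end TPEProofAux

open TPEProofAux

/-- Theorem 1: with `0 < 2γ₁ ≤ 2/3`, `γ₂ ∈ (0,1]`, bounds `ν̄, θ̄ ≥ 0`,
minimum impulse gap `ℓ ≥ 2`, and Loewner bounds `0 < b̂ ≤ b̌`, there is a constant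
`C ≥ 0` depending only on these parameters such that: for any covariance recursion
`η⁻¹(k+1) = γ₁ η⁻¹(k) + (1/γ₂) p(k+1)p(k+1)ᵀ` with `b̂ Iₙ ≤ η⁻¹(k) ≤ b̌ Iₙ`, any
impulse instants `(kₘ)` with `k₁ = 0` and gaps `≥ ℓ`, any displacements with
`‖ν(k)‖ ≤ ν̄`, `‖θ(k)‖ ≤ θ̄`, and any estimation error satisfying
`ê(k+1) = γ₁ η(k+1) η⁻¹(k)(ê(k) + ν(k))` off impulses and
`ê(k+1) = γ₁ η(k+1) η⁻¹(k)(ê(k) + ν(k) + θ(k))` at impulses, one has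
`limsup_{k→∞} ‖ê(k)‖² ≤ C` (here `‖ê(k)‖² = ê(k) ⬝ᵥ ê(k)` is the squared Euclidean
norm); i.e. the TPE approximately estimates the target position, with an asymptotic
bound independent of the initial estimation error. -/
theorem tpe_approximate_estimation (γ₁ γ₂ νbar θbar bhat bcheck : ℝ) (ℓ : ℕ)
    (hγ₁ : 0 < 2 * γ₁) (hγ₁' : 2 * γ₁ ≤ 2 / 3) (hγ₂ : 0 < γ₂) (hγ₂' : γ₂ ≤ 1)
    (hν : 0 ≤ νbar) (hθ : 0 ≤ θbar) (hℓ : 2 ≤ ℓ) (hb : 0 < bhat) (hbb : bhat ≤ bcheck) :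
    ∃ C ≥ (0 : ℝ), ∀ (n : ℕ) (p : ℕ → Fin n → ℝ)
      (ηinv : ℕ → Matrix (Fin n) (Fin n) ℝ) (km : ℕ → ℕ) (ν θ ehat : ℕ → Fin n → ℝ),
      (∀ k, (ηinv k).PosDef) →
      (∀ k, ηinv (k + 1) = γ₁ • ηinv k + γ₂⁻¹ • vecMulVec (p (k + 1)) (p (k + 1))) →
      (∀ k, (ηinv k - bhat • (1 : Matrix (Fin n) (Fin n) ℝ)).PosSemidef) →
      (∀ k, (bcheck • (1 : Matrix (Fin n) (Fin n) ℝ) - ηinv k).PosSemidef) →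
      StrictMono km → km 0 = 0 → (∀ m, km m + ℓ ≤ km (m + 1)) →
      (∀ k, Real.sqrt (ν k ⬝ᵥ ν k) ≤ νbar) →
      (∀ k, Real.sqrt (θ k ⬝ᵥ θ k) ≤ θbar) →
      (∀ k, k ∉ Set.range km →
        ehat (k + 1) = γ₁ • (((ηinv (k + 1))⁻¹ * ηinv k) *ᵥ (ehat k + ν k))) →
      (∀ k, k ∈ Set.range km →
        ehat (k + 1) = γ₁ • (((ηinv (k + 1))⁻¹ * ηinv k) *ᵥ (ehat k + ν k + θ k))) →
      limsup (fun k => ehat k ⬝ᵥ ehat k) atTop ≤ C := by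
  have hγ₁pos : 0 < γ₁ := by linarith
  have hbc : 0 < bcheck := lt_of_lt_of_le hb hbb
  set r : ℝ := 2 * γ₁ with hr_def
  set B' : ℝ := 4 * bcheck * (νbar ^ 2 + θbar ^ 2) with hB'_def
  have hB'0 : 0 ≤ B' := by positivity
  have hr1 : 1 - r > 0 := by rw [hr_def]; linarith
  set D : ℝ := γ₁ * B' / (1 - r) with hD_def
  have hD0 : 0 ≤ D := by positivity
  refine ⟨D / bhat, by positivity, ?_⟩
  intro n p ηinv km ν θ ehat hpd hrec hlow hup hkmono hk0 hkgap hνb hθb hoff hon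
  set V : ℕ → ℝ := fun k => ehat k ⬝ᵥ (ηinv k *ᵥ ehat k) with hV_def
  -- squared norms of noise are bounded
  have hdots : ∀ v : Fin n → ℝ, 0 ≤ v ⬝ᵥ v := fun v =>
    Finset.sum_nonneg fun i _ => mul_self_nonneg _
  have hsqbound : ∀ (v : Fin n → ℝ) (c : ℝ), 0 ≤ c → Real.sqrt (v ⬝ᵥ v) ≤ c →
      v ⬝ᵥ v ≤ c ^ 2 := by
    intro v c hc h
    have h0 := hdots v
    calc v ⬝ᵥ v = Real.sqrt (v ⬝ᵥ v) ^ 2 := (Real.sq_sqrt h0).symm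
      _ ≤ c ^ 2 := by
          apply pow_le_pow_left₀ (Real.sqrt_nonneg _) h
  have hν2 : ∀ k, ν k ⬝ᵥ ν k ≤ νbar ^ 2 := fun k => hsqbound _ _ hν (hνb k)
  have hθ2 : ∀ k, θ k ⬝ᵥ θ k ≤ θbar ^ 2 := fun k => hsqbound _ _ hθ (hθb k)
  -- quadratic form bounds
  have hqub : ∀ (k : ℕ) (x : Fin n → ℝ), x ⬝ᵥ (ηinv k *ᵥ x) ≤ bcheck * (x ⬝ᵥ x) := by
    intro k x
    have h := dot_nonneg (hup k) x
    rw [Matrix.sub_mulVec, dotProduct_sub, smul_mulVec, Matrix.one_mulVec,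
      dotProduct_smul, smul_eq_mul] at h
    linarith
  have hqlb : ∀ (k : ℕ) (x : Fin n → ℝ), bhat * (x ⬝ᵥ x) ≤ x ⬝ᵥ (ηinv k *ᵥ x) := by
    intro k x
    have h := dot_nonneg (hlow k) x
    rw [Matrix.sub_mulVec, dotProduct_sub, smul_mulVec, Matrix.one_mulVec,
      dotProduct_smul, smul_eq_mul] at h
    linarith
  -- one-step Lyapunov decrease
  have step : ∀ k, V (k + 1) ≤ r * V k + γ₁ * B' := by
    intro k
    set M := ηinv k with hM_def
    set N := ηinv (k + 1) with hN_def
    have hNd : IsUnit N.det := isUnit_iff_ne_zero.mpr (hpd (k + 1)).det_pos.ne'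
    have hNM : (N - γ₁ • M).PosSemidef := by
      rw [hN_def, hrec k, add_sub_cancel_left]
      exact psd_smul (le_of_lt (inv_pos.mpr hγ₂)) (psd_vecMulVec _)
    have hcon := contraction (hpd k) (hpd (k + 1)) hγ₁pos hNM
    -- common computation given the recursion with vector x
    have main : ∀ x : Fin n → ℝ, ehat (k + 1) = γ₁ • ((N⁻¹ * M) *ᵥ x) →
        V (k + 1) ≤ γ₁ * (x ⬝ᵥ (M *ᵥ x)) := by
      intro x hx
      have hVeq : V (k + 1) = γ₁ ^ 2 * (x ⬝ᵥ ((M * N⁻¹ * M) *ᵥ x)) := by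
        have hNw : N *ᵥ ((N⁻¹ * M) *ᵥ x) = M *ᵥ x := by
          rw [mulVec_mulVec, mul_nonsing_inv_cancel_left _ _ hNd]
        have hTr : (N⁻¹ * M)ᵀ = M * N⁻¹ := by
          rw [Matrix.transpose_mul, transpose_eq (hpd k).1,
            transpose_eq (hpd (k+1)).posSemidef.inv.1]
        calc V (k + 1) = (γ₁ • ((N⁻¹ * M) *ᵥ x)) ⬝ᵥ (N *ᵥ (γ₁ • ((N⁻¹ * M) *ᵥ x))) := by
              rw [hV_def]; simp only [← hx, ← hN_def]
          _ = γ₁ ^ 2 * (((N⁻¹ * M) *ᵥ x) ⬝ᵥ (N *ᵥ ((N⁻¹ * M) *ᵥ x))) := by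
              rw [mulVec_smul, smul_dotProduct, dotProduct_smul, smul_eq_mul, smul_eq_mul]
              ring
          _ = γ₁ ^ 2 * (x ⬝ᵥ ((M * N⁻¹ * M) *ᵥ x)) := by
              rw [hNw, dot_shift, hTr, mulVec_mulVec, Matrix.mul_assoc]
      have hc := dot_nonneg hcon x
      rw [Matrix.sub_mulVec, dotProduct_sub, smul_mulVec, smul_mulVec,
        dotProduct_smul, dotProduct_smul, smul_eq_mul, smul_eq_mul] at hc
      rw [hVeq]
      linarith
    have hMpsd := (hpd k).posSemidef
    by_cases hmem : k ∈ Set.range km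
    · have hx := hon k hmem
      have h1 : V (k + 1) ≤ γ₁ * ((ehat k + ν k + θ k) ⬝ᵥ (M *ᵥ (ehat k + ν k + θ k))) :=
        main _ hx
      have h2 : (ehat k + ν k + θ k) ⬝ᵥ (M *ᵥ (ehat k + ν k + θ k))
          ≤ 2 * V k + 2 * ((ν k + θ k) ⬝ᵥ (M *ᵥ (ν k + θ k))) := by
        rw [add_assoc]
        exact quad_add_le hMpsd _ _
      have h3 : (ν k + θ k) ⬝ᵥ (M *ᵥ (ν k + θ k))
          ≤ 2 * (ν k ⬝ᵥ (M *ᵥ ν k)) + 2 * (θ k ⬝ᵥ (M *ᵥ θ k)) := quad_add_le hMpsd _ _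
      have h4 : ν k ⬝ᵥ (M *ᵥ ν k) ≤ bcheck * νbar ^ 2 :=
        le_trans (hqub k _) (by have := hν2 k; nlinarith)
      have h5 : θ k ⬝ᵥ (M *ᵥ θ k) ≤ bcheck * θbar ^ 2 :=
        le_trans (hqub k _) (by have := hθ2 k; nlinarith)
      have hm1 : 0 ≤ bcheck * νbar ^ 2 := by positivity
      have hm2 : 0 ≤ bcheck * θbar ^ 2 := by positivity
      have hB : (ehat k + ν k + θ k) ⬝ᵥ (M *ᵥ (ehat k + ν k + θ k)) ≤ 2 * V k + B' := by
        rw [hB'_def]; linarith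
      calc V (k + 1) ≤ γ₁ * (2 * V k + B') :=
            le_trans h1 (mul_le_mul_of_nonneg_left hB hγ₁pos.le)
        _ = r * V k + γ₁ * B' := by rw [hr_def]; ring
    · have hx := hoff k hmem
      have h1 : V (k + 1) ≤ γ₁ * ((ehat k + ν k) ⬝ᵥ (M *ᵥ (ehat k + ν k))) := main _ hx
      have h2 : (ehat k + ν k) ⬝ᵥ (M *ᵥ (ehat k + ν k))
          ≤ 2 * V k + 2 * (ν k ⬝ᵥ (M *ᵥ ν k)) := quad_add_le hMpsd _ _
      have h4 : ν k ⬝ᵥ (M *ᵥ ν k) ≤ bcheck * νbar ^ 2 :=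
        le_trans (hqub k _) (by have := hν2 k; nlinarith)
      have hm1 : 0 ≤ bcheck * νbar ^ 2 := by positivity
      have hm2 : 0 ≤ bcheck * θbar ^ 2 := by positivity
      have hB : (ehat k + ν k) ⬝ᵥ (M *ᵥ (ehat k + ν k)) ≤ 2 * V k + B' := by
        rw [hB'_def]; linarith
      calc V (k + 1) ≤ γ₁ * (2 * V k + B') :=
            le_trans h1 (mul_le_mul_of_nonneg_left hB hγ₁pos.le)
        _ = r * V k + γ₁ * B' := by rw [hr_def]; ring
  -- geometric envelope
  set W : ℕ → ℝ := fun k => r ^ k * V 0 + D with hW_def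
  have hWstep : ∀ k, r * W k + γ₁ * B' = W (k + 1) := by
    intro k
    rw [hW_def]
    simp only
    have : γ₁ * B' = (1 - r) * D := by
      rw [hD_def]; field_simp
    rw [this]; ring
  have hVW : ∀ k, V k ≤ W k := by
    intro k
    induction k with
    | zero => rw [hW_def]; simp; linarith [hD0]
    | succ k ih =>
        calc V (k + 1) ≤ r * V k + γ₁ * B' := step k
          _ ≤ r * W k + γ₁ * B' := by
                have := mul_le_mul_of_nonneg_left ih (by linarith : (0:ℝ) ≤ r)
                linarith
          _ = W (k + 1) := hWstep k
  -- pass to limsup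
  have hf : ∀ k, ehat k ⬝ᵥ ehat k ≤ W k / bhat := by
    intro k
    rw [le_div_iff₀ hb]
    calc ehat k ⬝ᵥ ehat k * bhat = bhat * (ehat k ⬝ᵥ ehat k) := by ring
      _ ≤ V k := hqlb k _
      _ ≤ W k := hVW k
  have hrlt1 : r < 1 := by linarith
  have hr0 : 0 ≤ r := by linarith
  have hWt : Tendsto W atTop (nhds D) := by
    have h1 : Tendsto (fun k : ℕ => r ^ k * V 0 + D) atTop (nhds (0 * V 0 + D)) :=
      ((tendsto_pow_atTop_nhds_zero_of_lt_one hr0 hrlt1).mul_const _).add tendsto_const_nhds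
    rw [hW_def]
    simpa using h1
  have hut : Tendsto (fun k => W k / bhat) atTop (nhds (D / bhat)) := hWt.div_const _
  have hlim : limsup (fun k => W k / bhat) atTop = D / bhat := hut.limsup_eq
  calc limsup (fun k => ehat k ⬝ᵥ ehat k) atTop ≤ limsup (fun k => W k / bhat) atTop := by
        exact limsup_le_limsup (Eventually.of_forall hf)
          (isCoboundedUnder_le_of_le atTop (x := 0) fun k => hdots _)
          hut.isBoundedUnder_le
    _ = D / bhat := hlim
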